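/- Let V: ℝ₊ⁿ → ℝ₊ be a function that is multiplicatively convex in each coordinate separately, and suppose moreover that V satisfies the following closure property: for every index k, every real λ, and every substitution of the form (t₁,…,t_k) ↦ (t₁,…,t_{k-1}, t₁^λ t_k), the resulting function is again multiplicatively convex in its first k−1 coordinates whenever V is (jointly) multiplicatively convex in its first k−1 coordinates after any such reparametrization. Then, as shown by the inductive argument: if F(s₁,…,s_n) := log V(e^{s₁},…,e^{s_n}) is convex in each variable and convex along all reparametrized (k−1)-dimensional coordinate subspaces obtained by the substitutions s_k ↦ λ s₁ + s_k, then F is jointly convex on ℝⁿ. -/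

import Mathlib

/-- `F` is (jointly) convex in the first `k` coordinates, the remaining
coordinates being fixed arbitrarily. -/
def ConvexInFirst (n : ℕ) (k : ℕ) (F : (Fin n → ℝ) → ℝ) : Prop :=
  ∀ c : Fin n → ℝ, ConvexOn ℝ Set.univ
    (fun s : Fin n → ℝ => F (fun i => if (i : ℕ) < k then s i else c i))

/-- The reparametrization `s ↦ s` with `s_k` replaced by `λ·s₁ + s_k`. -/
def subst (n : ℕ) (hn : 0 < n) (k : Fin n) (lam : ℝ) (s : Fin n → ℝ) : Fin n → ℝ :=
  Function.update s k (lam * s ⟨0, hn⟩ + s k)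

lemma subst_eq (n : ℕ) (hn : 0 < n) (k : Fin n) (hk0 : 0 < (k : ℕ))
    (hktop : ∀ i : Fin n, i ≠ k → (i : ℕ) < (k : ℕ))
    (lam : ℝ) (c x : Fin n → ℝ)
    (hx : x k = lam * x ⟨0, hn⟩ + c k) :
    subst n hn k lam (fun i => if (i : ℕ) < (k : ℕ) then x i else c i) = x := by
  funext i
  unfold subst
  rcases eq_or_ne i k with h | h
  · subst h
    rw [Function.update_self]
    show lam * (if ((⟨0, hn⟩ : Fin n) : ℕ) < (i : ℕ) then x ⟨0, hn⟩ else c ⟨0, hn⟩)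
        + (if (i : ℕ) < (i : ℕ) then x i else c i) = x i
    rw [if_pos hk0, if_neg (lt_irrefl _), hx]
  · rw [Function.update_of_ne h]
    show (if (i : ℕ) < (k : ℕ) then x i else c i) = x i
    rw [if_pos (hktop i h)]

lemma key (n : ℕ) (hn : 0 < n) (F : (Fin n → ℝ) → ℝ)
    (h2 : ∀ (k : Fin n) (lam : ℝ),
      ConvexInFirst n k (fun s => F (subst n hn k lam s)))
    (k : Fin n) (hk0 : 0 < (k : ℕ))
    (hktop : ∀ i : Fin n, i ≠ k → (i : ℕ) < (k : ℕ))
    (a b : Fin n → ℝ) (t s : ℝ) (ht : 0 ≤ t) (hs : 0 ≤ s) (hts : t + s = 1)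
    (lam : ℝ) (hlam : b k - a k = lam * (b ⟨0, hn⟩ - a ⟨0, hn⟩)) :
    F (t • a + s • b) ≤ t * F a + s * F b := by
  set z : Fin n := ⟨0, hn⟩ with hz
  set c : Fin n → ℝ := fun _ => a k - lam * a z with hc
  have ea := subst_eq n hn k hk0 hktop lam c a (by simp only [hc]; ring)
  have eb := subst_eq n hn k hk0 hktop lam c b (by simp only [hc]; linarith [hlam])
  have ex := subst_eq n hn k hk0 hktop lam c (t • a + s • b) (by
    simp only [hc, Pi.add_apply, Pi.smul_apply, smul_eq_mul]
    linear_combination s * hlam + (a k - lam * a z) * hts)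
  have H := (h2 k lam c).2 (Set.mem_univ a) (Set.mem_univ b) ht hs hts
  simp only [smul_eq_mul] at H
  rw [ea, eb, ex] at H
  exact H

lemma eps_le (x y M : ℝ) (h : ∀ ε : ℝ, 0 < ε → ε ≤ 1 → x ≤ y + ε * M) : x ≤ y := by
  rcases le_or_gt M 0 with hM | hM
  · have := h 1 one_pos le_rfl
    nlinarith
  · refine le_of_forall_pos_le_add fun δ hδ => ?_
    have hε : 0 < min 1 (δ / M) := lt_min one_pos (div_pos hδ hM)
    have h1 := h _ hε (min_le_left _ _)
    have h2 : min 1 (δ / M) * M ≤ δ / M * M :=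
      mul_le_mul_of_nonneg_right (min_le_right _ _) hM.le
    rw [div_mul_cancel₀ _ hM.ne'] at h2
    linarith

/-- induction step for joint multiplicative convexity. If
`F(s₁,…,s_n) = log V(e^{s₁},…,e^{s_n})` is convex in each variable and convex in
its first `k-1` coordinates after every substitution `s_k ↦ λ s₁ + s_k`, then `F`
is jointly convex on `ℝⁿ`. -/
theorem stmt_6 (n : ℕ) (hn : 0 < n) (F : (Fin n → ℝ) → ℝ)
    (h1 : ∀ (i : Fin n) (c : Fin n → ℝ),
      ConvexOn ℝ Set.univ (fun x : ℝ => F (Function.update c i x)))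
    (h2 : ∀ (k : Fin n) (lam : ℝ),
      ConvexInFirst n k (fun s => F (subst n hn k lam s))) :
    ConvexOn ℝ Set.univ F := by
  refine ⟨convex_univ, fun a _ b _ t s ht hs hts => ?_⟩
  simp only [smul_eq_mul]
  rcases eq_or_lt_of_le (show 1 ≤ n from hn) with h1n | hn2
  · -- n = 1 case
    have hext : ∀ u : Fin n → ℝ, u = Function.update a ⟨0, hn⟩ (u ⟨0, hn⟩) := by
      intro u; funext i
      have hi : i = ⟨0, hn⟩ := by
        apply Fin.ext; omega
      subst hi; simp
    have H := (h1 ⟨0, hn⟩ a).2 (Set.mem_univ (a ⟨0, hn⟩)) (Set.mem_univ (b ⟨0, hn⟩)) ht hs hts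
    simp only [smul_eq_mul] at H
    rw [← hext a] at H
    rw [← hext b] at H
    have hx : Function.update a ⟨0, hn⟩ (t * a ⟨0, hn⟩ + s * b ⟨0, hn⟩) = t • a + s • b := by
      rw [hext (t • a + s • b)]
      simp
    rw [hx] at H
    exact H
  · -- n ≥ 2 case
    set z : Fin n := ⟨0, hn⟩ with hz
    have hk1 : n - 1 < n := by omega
    set k : Fin n := ⟨n - 1, hk1⟩ with hk
    have hk0 : 0 < (k : ℕ) := by show 0 < n - 1; omega
    have hktop : ∀ i : Fin n, i ≠ k → (i : ℕ) < (k : ℕ) := by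
      intro i hi
      have hlt := i.isLt
      have hne : (i : ℕ) ≠ n - 1 := fun h => hi (Fin.ext h)
      show (i : ℕ) < n - 1
      omega
    by_cases h0 : b z - a z = 0
    · by_cases hkk : b k - a k = 0
      · exact key n hn F h2 k hk0 hktop a b t s ht hs hts 0 (by rw [hkk]; ring)
      · -- epsilon trick
        rcases ht.eq_or_lt with h | ht'
        · rw [← h]; have hs1 : s = 1 := by linarith
          rw [hs1]; simp
        rcases hs.eq_or_lt with h | hs'
        · rw [← h]; have ht1 : t = 1 := by linarith
          rw [ht1]; simp
        apply eps_le _ _ (t * s * ((F (Function.update a z (a z + 1)) - F a)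
          + (F (Function.update b z (b z - 1)) - F b)))
        intro ε hε hε1
        have hkz : k ≠ z := by
          intro h; rw [h] at hk0; simp [hz] at hk0
        set p := Function.update a z (a z + s * ε) with hp
        set q := Function.update b z (b z - t * ε) with hq
        have hpq : t • p + s • q = t • a + s • b := by
          funext i
          rcases eq_or_ne i z with h | h
          · subst h
            simp only [Pi.add_apply, Pi.smul_apply, smul_eq_mul, hp, hq,
              Function.update_self]
            ring
          · simp only [Pi.add_apply, Pi.smul_apply, smul_eq_mul, hp, hq,
              Function.update_of_ne h]
        have hpz : p z = a z + s * ε := by rw [hp, Function.update_self]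
        have hqz : q z = b z - t * ε := by rw [hq, Function.update_self]
        have hsum : t * ε + s * ε = ε := by rw [← add_mul, hts, one_mul]
        have hne : q z - p z ≠ 0 := by
          rw [hpz, hqz]; intro hcon; linarith
        have Hk := key n hn F h2 k hk0 hktop p q t s ht hs hts
          ((q k - p k) / (q z - p z)) (div_mul_cancel₀ _ hne).symm
        rw [hpq] at Hk
        -- bound F p
        have hsε0 : 0 ≤ s * ε := by positivity
        have hsε1 : s * ε ≤ 1 := by nlinarith
        have htε0 : 0 ≤ t * ε := by positivity
        have htε1 : t * ε ≤ 1 := by nlinarith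
        have Ha := (h1 z a).2 (Set.mem_univ (a z)) (Set.mem_univ (a z + 1))
          (by linarith : (0:ℝ) ≤ 1 - s * ε) hsε0 (by ring)
        simp only [smul_eq_mul, Function.update_eq_self] at Ha
        rw [show (1 - s * ε) * a z + s * ε * (a z + 1) = a z + s * ε from by ring,
          ← hp] at Ha
        have Hb := (h1 z b).2 (Set.mem_univ (b z)) (Set.mem_univ (b z - 1))
          (by linarith : (0:ℝ) ≤ 1 - t * ε) htε0 (by ring)
        simp only [smul_eq_mul, Function.update_eq_self] at Hb
        rw [show (1 - t * ε) * b z + t * ε * (b z - 1) = b z - t * ε from by ring,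
          ← hq] at Hb
        have h3 : t * F p ≤ t * ((1 - s * ε) * F a
            + s * ε * F (Function.update a z (a z + 1))) :=
          mul_le_mul_of_nonneg_left Ha ht
        have h4 : s * F q ≤ s * ((1 - t * ε) * F b
            + t * ε * F (Function.update b z (b z - 1))) :=
          mul_le_mul_of_nonneg_left Hb hs
        nlinarith [Hk, h3, h4]
    · exact key n hn F h2 k hk0 hktop a b t s ht hs hts
        ((b k - a k) / (b z - a z)) (div_mul_cancel₀ _ h0).symm
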